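/- arXiv:2306.00896 — 6 statements merged into one kernel-verified Lean document; each statement's English description precedes it below -/
import Mathlib

section
/- For every real n > 0, the universal profile f_n is strictly decreasing on ℝ: for all real s₁ < s₂ one has f_n(s₂) < f_n(s₁). -/
open MeasureTheory
open scoped ENNReal

/-- `I k s = ∫₀^∞ x^k e^{-x⁴/4 - s x²/2} dx`. -/
noncomputable def I (k s : ℝ) : ℝ :=
  ∫ x in Set.Ioi (0 : ℝ), x ^ k * Real.exp (-x ^ 4 / 4 - s * x ^ 2 / 2)

/-- The universal profile `f n s = I (n+1) s / (n · I (n-1) s)`. -/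
noncomputable def f (n s : ℝ) : ℝ := I (n + 1) s / (n * I (n - 1) s)

noncomputable def g (k s x : ℝ) : ℝ := x ^ k * Real.exp (-x ^ 4 / 4 - s * x ^ 2 / 2)

lemma g_pos {k s x : ℝ} (hx : 0 < x) : 0 < g k s x :=
  mul_pos (Real.rpow_pos_of_pos hx k) (Real.exp_pos _)

lemma integrable_g (k s : ℝ) (hk : -1 < k) : IntegrableOn (g k s) (Set.Ioi 0) := by
  have base : IntegrableOn
      (fun x : ℝ => Real.exp (s ^ 2 / 2) * (x ^ k * Real.exp (-(1/8) * x ^ (4:ℝ))))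
      (Set.Ioi 0) :=
    (integrableOn_rpow_mul_exp_neg_mul_rpow hk (by norm_num) (by norm_num)).const_mul _
  refine base.mono' ?_ ?_
  · exact (by fun_prop :
      Measurable (fun x : ℝ => x ^ k * Real.exp (-x ^ 4 / 4 - s * x ^ 2 / 2))).aestronglyMeasurable
  · filter_upwards [ae_restrict_mem measurableSet_Ioi] with x hx
    have hx0 : (0:ℝ) < x := hx
    have h1 : ‖g k s x‖ = g k s x := Real.norm_of_nonneg (g_pos hx0).le
    rw [h1]
    unfold g
    rw [show ((4:ℝ) = ((4:ℕ):ℝ)) by norm_num, Real.rpow_natCast]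
    have hexp : Real.exp (-x ^ 4 / 4 - s * x ^ 2 / 2)
        ≤ Real.exp (s ^ 2 / 2) * Real.exp (-(1/8) * x ^ (4:ℕ)) := by
      rw [← Real.exp_add]
      apply Real.exp_le_exp.2
      nlinarith [sq_nonneg (x ^ 2 + 2 * s)]
    calc x ^ k * Real.exp (-x ^ 4 / 4 - s * x ^ 2 / 2)
        ≤ x ^ k * (Real.exp (s ^ 2 / 2) * Real.exp (-(1/8) * x ^ (4:ℕ))) := by
          exact mul_le_mul_of_nonneg_left hexp (Real.rpow_pos_of_pos hx0 k).le
      _ = Real.exp (s ^ 2 / 2) * (x ^ k * Real.exp (-(1/8) * x ^ (4:ℕ))) := by ring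

lemma I_pos {k s : ℝ} (hk : -1 < k) : 0 < I k s := by
  have hInt := integrable_g k s hk
  have : I k s = ∫ x in Set.Ioi (0:ℝ), g k s x := rfl
  rw [this]
  rw [setIntegral_pos_iff_support_of_nonneg_ae ?_ hInt]
  · have hsub : Set.Ioi (0:ℝ) ⊆ Function.support (g k s) ∩ Set.Ioi 0 :=
      Set.subset_inter (fun x hx => (g_pos hx).ne') subset_rfl
    calc (0:ℝ≥0∞) < volume (Set.Ioi (0:ℝ)) := by simp
      _ ≤ _ := measure_mono hsub
  · filter_upwards [ae_restrict_mem measurableSet_Ioi] with x hx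
    exact (g_pos hx).le

lemma g_succ {x : ℝ} (hx : 0 < x) (k s : ℝ) : g (k + 2) s x = x ^ 2 * g k s x := by
  unfold g
  rw [show k + 2 = k + ((2:ℕ):ℝ) by norm_num, Real.rpow_add hx, Real.rpow_natCast]
  ring

lemma key_lt {n s₁ s₂ x y : ℝ} (h : s₁ < s₂) (hx : 0 < x) (hy : 0 < y) (hxy : x < y) :
    0 < g (n+1) s₁ x * g (n-1) s₂ y + g (n-1) s₂ x * g (n+1) s₁ y
      - g (n+1) s₂ x * g (n-1) s₁ y - g (n-1) s₁ x * g (n+1) s₂ y := by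
  have e1 : (n:ℝ) + 1 = (n-1) + 2 := by ring
  rw [e1]
  simp only [g_succ hx, g_succ hy]
  have hx2y2 : x ^ 2 < y ^ 2 := by nlinarith
  have had : g (n-1) s₁ x * g (n-1) s₂ y < g (n-1) s₂ x * g (n-1) s₁ y := by
    have e2 : g (n-1) s₁ x * g (n-1) s₂ y = (x ^ (n-1) * y ^ (n-1)) *
        Real.exp ((-x^4/4 - s₁*x^2/2) + (-y^4/4 - s₂*y^2/2)) := by
      unfold g; rw [Real.exp_add]; ring
    have e3 : g (n-1) s₂ x * g (n-1) s₁ y = (x ^ (n-1) * y ^ (n-1)) *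
        Real.exp ((-x^4/4 - s₂*x^2/2) + (-y^4/4 - s₁*y^2/2)) := by
      unfold g; rw [Real.exp_add]; ring
    rw [e2, e3]
    refine mul_lt_mul_of_pos_left (Real.exp_lt_exp.2 (by nlinarith)) ?_
    exact mul_pos (Real.rpow_pos_of_pos hx _) (Real.rpow_pos_of_pos hy _)
  have e4 : x ^ 2 * g (n-1) s₁ x * g (n-1) s₂ y + g (n-1) s₂ x * (y ^ 2 * g (n-1) s₁ y)
      - x ^ 2 * g (n-1) s₂ x * g (n-1) s₁ y - g (n-1) s₁ x * (y ^ 2 * g (n-1) s₂ y)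
      = (x ^ 2 - y ^ 2) * (g (n-1) s₁ x * g (n-1) s₂ y - g (n-1) s₂ x * g (n-1) s₁ y) := by
    ring
  rw [e4]
  exact mul_pos_of_neg_of_neg (by linarith) (by linarith)

lemma cross {n s₁ s₂ : ℝ} (hn : 0 < n) (h : s₁ < s₂) :
    I (n+1) s₂ * I (n-1) s₁ < I (n+1) s₁ * I (n-1) s₂ := by
  have hk1 : (-1:ℝ) < n + 1 := by linarith
  have hk2 : (-1:ℝ) < n - 1 := by linarith
  set ν := volume.restrict (Set.Ioi (0:ℝ)) with hν
  have hi : ∀ k s : ℝ, -1 < k → Integrable (g k s) ν := fun k s hk => integrable_g k s hk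
  have hint1 := (hi _ s₁ hk1).mul_prod (hi _ s₂ hk2)
  have hint2 := (hi _ s₂ hk2).mul_prod (hi _ s₁ hk1)
  have hint3 := (hi _ s₂ hk1).mul_prod (hi _ s₁ hk2)
  have hint4 := (hi _ s₁ hk2).mul_prod (hi _ s₂ hk1)
  set Φ : ℝ × ℝ → ℝ := fun p =>
    g (n+1) s₁ p.1 * g (n-1) s₂ p.2 + g (n-1) s₂ p.1 * g (n+1) s₁ p.2
    - g (n+1) s₂ p.1 * g (n-1) s₁ p.2 - g (n-1) s₁ p.1 * g (n+1) s₂ p.2 with hΦ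
  have hintΦ : Integrable Φ (ν.prod ν) := ((hint1.add hint2).sub hint3).sub hint4
  have hIeq : ∀ k s : ℝ, I k s = ∫ x, g k s x ∂ν := fun _ _ => rfl
  have hval : ∫ p, Φ p ∂(ν.prod ν)
      = 2 * (I (n+1) s₁ * I (n-1) s₂) - 2 * (I (n+1) s₂ * I (n-1) s₁) := by
    simp only [hΦ]
    have hA : Integrable (fun z : ℝ × ℝ => g (n+1) s₁ z.1 * g (n-1) s₂ z.2
        + g (n-1) s₂ z.1 * g (n+1) s₁ z.2) (ν.prod ν) := hint1.add hint2
    have hB : Integrable (fun z : ℝ × ℝ => g (n+1) s₁ z.1 * g (n-1) s₂ z.2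
        + g (n-1) s₂ z.1 * g (n+1) s₁ z.2 - g (n+1) s₂ z.1 * g (n-1) s₁ z.2) (ν.prod ν) :=
      hA.sub hint3
    rw [integral_sub hB hint4,
        integral_sub hA hint3, integral_add hint1 hint2,
        integral_prod_mul, integral_prod_mul, integral_prod_mul, integral_prod_mul]
    simp only [hIeq]; ring
  have hpos : 0 < ∫ p, Φ p ∂(ν.prod ν) := by
    refine (integral_pos_iff_support_of_nonneg_ae ?_ hintΦ).2 ?_
    · have hprod : ν.prod ν = (volume.prod volume).restrict
        ((Set.Ioi (0:ℝ)) ×ˢ (Set.Ioi (0:ℝ))) := (Measure.prod_restrict _ _)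
      rw [hprod]
      filter_upwards [ae_restrict_mem (measurableSet_Ioi.prod measurableSet_Ioi)] with p hp
      obtain ⟨hp1, hp2⟩ := hp
      have hp1 : (0:ℝ) < p.1 := hp1
      have hp2 : (0:ℝ) < p.2 := hp2
      rcases lt_trichotomy p.1 p.2 with hlt | heq | hgt
      · exact (key_lt h hp1 hp2 hlt).le
      · have : Φ p = 0 := by simp only [hΦ, ← heq]; unfold g; ring
        simp [this]
      · have h0 := key_lt (n := n) h hp2 hp1 hgt
        have : Φ p = g (n+1) s₁ p.2 * g (n-1) s₂ p.1 + g (n-1) s₂ p.2 * g (n+1) s₁ p.1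
            - g (n+1) s₂ p.2 * g (n-1) s₁ p.1 - g (n-1) s₁ p.2 * g (n+1) s₂ p.1 := by
          simp only [hΦ]; ring
        simpa [this] using h0.le
    · refine lt_of_lt_of_le ?_ (measure_mono (?_ :
        (Set.Ioo (0:ℝ) 1 ×ˢ Set.Ioo (1:ℝ) 2) ⊆ Function.support Φ))
      · rw [hν, Measure.prod_prod, Measure.restrict_apply measurableSet_Ioo,
          Measure.restrict_apply measurableSet_Ioo,
          show Set.Ioo (0:ℝ) 1 ∩ Set.Ioi 0 = Set.Ioo 0 1 from
            Set.inter_eq_left.2 (fun x hx => hx.1),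
          show Set.Ioo (1:ℝ) 2 ∩ Set.Ioi 0 = Set.Ioo 1 2 from
            Set.inter_eq_left.2 (fun x hx => lt_trans zero_lt_one hx.1)]
        simp [Real.volume_Ioo]
      · rintro ⟨x, y⟩ ⟨hx, hy⟩
        have hx0 : (0:ℝ) < x := hx.1
        have hy0 : (0:ℝ) < y := lt_trans zero_lt_one hy.1
        have hxy : x < y := lt_trans hx.2 hy.1
        exact (key_lt h hx0 hy0 hxy).ne'
  linarith [hval ▸ hpos]

/-- For every real `n > 0`, the universal profile `f n` is strictly decreasing on `ℝ`. -/
theorem universal_profile_strict_anti_in_s (n : ℝ) (hn : 0 < n) :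
    ∀ s₁ s₂ : ℝ, s₁ < s₂ → f n s₂ < f n s₁ := by
  intro s₁ s₂ h
  have h1 : 0 < I (n-1) s₁ := I_pos (by linarith)
  have h2 : 0 < I (n-1) s₂ := I_pos (by linarith)
  unfold f
  rw [div_lt_div_iff₀ (mul_pos hn h2) (mul_pos hn h1)]
  calc I (n+1) s₂ * (n * I (n-1) s₁) = n * (I (n+1) s₂ * I (n-1) s₁) := by ring
    _ < n * (I (n+1) s₁ * I (n-1) s₂) := mul_lt_mul_of_pos_left (cross hn h) hn
    _ = I (n+1) s₁ * (n * I (n-1) s₂) := by ring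
end

section
/- For every fixed s ∈ ℝ, the universal profile is strictly decreasing in its index on (0,∞): for all reals 0 < m < n one has f_n(s) < f_m(s). -/
open MeasureTheory

open MeasureTheory Set Real Filter

noncomputable def w (s x : ℝ) : ℝ := Real.exp (-x ^ 4 / 4 - s * x ^ 2 / 2)

lemma w_pos (s x : ℝ) : 0 < w s x := Real.exp_pos _

lemma w_cont (s : ℝ) : Continuous (w s) := by
  unfold w; fun_prop

lemma integrable_I (s k : ℝ) (hk : -1 < k) :
    IntegrableOn (fun x : ℝ => x ^ k * w s x) (Ioi 0) := by
  have base : IntegrableOn (fun x : ℝ => x ^ k * Real.exp (-(1/8) * x ^ (4:ℝ))) (Ioi 0) :=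
    integrableOn_rpow_mul_exp_neg_mul_rpow hk (by norm_num) (by norm_num)
  apply ((base.const_mul (Real.exp (s^2/2))).mono' ?_ ?_)
  · apply ContinuousOn.aestronglyMeasurable ?_ measurableSet_Ioi
    intro x hx
    exact (((Real.continuousAt_rpow_const x k (Or.inl (ne_of_gt hx))).mul
      (w_cont s).continuousAt)).continuousWithinAt
  · filter_upwards [ae_restrict_mem measurableSet_Ioi] with x hx
    have hx0 : 0 < x := hx
    have hxr : x ^ (4:ℝ) = x ^ 4 := by
      rw [show ((4:ℝ)) = ((4:ℕ):ℝ) by norm_num, Real.rpow_natCast]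
    have hwp := w_pos s x
    have hrp := Real.rpow_pos_of_pos hx0 k
    rw [Real.norm_eq_abs, abs_of_nonneg (by positivity)]
    rw [hxr]
    have h1 : w s x ≤ Real.exp (s^2/2) * Real.exp (-(1/8) * x ^ 4) := by
      rw [← Real.exp_add]
      apply Real.exp_le_exp.2
      unfold w at *
      nlinarith [sq_nonneg (x^2 + 2*s)]
    calc x ^ k * w s x ≤ x ^ k * (Real.exp (s^2/2) * Real.exp (-(1/8) * x ^ 4)) :=
          mul_le_mul_of_nonneg_left h1 hrp.le
      _ = Real.exp (s^2/2) * (x ^ k * Real.exp (-(1/8) * x ^ 4)) := by ring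

lemma I_pos' (s k : ℝ) (hk : -1 < k) : 0 < ∫ x in Ioi (0:ℝ), x ^ k * w s x := by
  rw [setIntegral_pos_iff_support_of_nonneg_ae ?_ (integrable_I s k hk)]
  · have hsub : Ioi (0:ℝ) ⊆ (Function.support fun x => x ^ k * w s x) ∩ Ioi 0 := by
      intro x hx
      refine ⟨ne_of_gt ?_, hx⟩
      have := w_pos s x
      have := Real.rpow_pos_of_pos (mem_Ioi.mp hx) k
      positivity
    refine lt_of_lt_of_le ?_ (measure_mono hsub)
    simp [Real.volume_Ioi]
  · filter_upwards [ae_restrict_mem measurableSet_Ioi] with x hx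
    have := w_pos s x
    have := Real.rpow_pos_of_pos (mem_Ioi.mp hx) k
    positivity

lemma w_hasDeriv (s x : ℝ) : HasDerivAt (w s) ((-x^3 - s*x) * w s x) x := by
  have hg : HasDerivAt (fun x : ℝ => -x ^ 4 / 4 - s * x ^ 2 / 2) (-x^3 - s*x) x := by
    have h4 : HasDerivAt (fun x : ℝ => x ^ 4) (4 * x ^ 3) x := by
      simpa using hasDerivAt_pow 4 x
    have h2 : HasDerivAt (fun x : ℝ => x ^ 2) (2 * x) x := by
      simpa using hasDerivAt_pow 2 x
    have := ((h4.neg.div_const 4).sub ((h2.const_mul s).div_const 2))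
    refine this.congr_deriv ?_
    ring
  exact hg.exp.congr_deriv (mul_comm _ _)

lemma ibp (s n : ℝ) (hn : 0 < n) :
    n * (∫ x in Ioi (0:ℝ), x ^ (n-1) * w s x)
      = (∫ x in Ioi (0:ℝ), x ^ (n+3) * w s x) + s * ∫ x in Ioi (0:ℝ), x ^ (n+1) * w s x := by
  set F : ℝ → ℝ := fun x => x ^ n * w s x with hF
  set F' : ℝ → ℝ := fun x => n * (x ^ (n-1) * w s x)
      - ((x ^ (n+3) * w s x) + s * (x ^ (n+1) * w s x)) with hF'
  have hderiv : ∀ x ∈ Ioi (0:ℝ), HasDerivAt F (F' x) x := by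
    intro x hx
    have hx0 : 0 < x := hx
    have h1 : HasDerivAt (fun x : ℝ => x ^ n) (n * x ^ (n-1)) x :=
      Real.hasDerivAt_rpow_const (Or.inl (ne_of_gt hx0))
    have := h1.mul (w_hasDeriv s x)
    refine this.congr_deriv ?_
    have e3 : x ^ (n+3) = x ^ n * x ^ 3 := by
      rw [Real.rpow_add hx0, show ((3:ℝ)) = ((3:ℕ):ℝ) by norm_num, Real.rpow_natCast]
    have e1 : x ^ (n+1) = x ^ n * x ^ 1 := by
      rw [Real.rpow_add hx0, show ((1:ℝ)) = ((1:ℕ):ℝ) by norm_num, Real.rpow_natCast]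
    simp only [hF', e3, e1]
    ring
  have hint : IntegrableOn F' (Ioi (0:ℝ)) := by
    apply Integrable.sub
    · exact (integrable_I s (n-1) (by linarith)).const_mul n
    · exact (integrable_I s (n+3) (by linarith)).add ((integrable_I s (n+1) (by linarith)).const_mul s)
  have hcont : ContinuousWithinAt F (Ici (0:ℝ)) 0 := by
    apply ContinuousAt.continuousWithinAt
    exact (Real.continuousAt_rpow_const 0 n (Or.inr hn.le)).mul (w_cont s).continuousAt
  have htend : Tendsto F atTop (nhds 0) := by
    have hbound : ∀ᶠ x in atTop, ‖F x‖ ≤ Real.exp (s^2/2) * (x ^ n * Real.exp (-(1/8) * x)) := by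
      filter_upwards [eventually_ge_atTop (1:ℝ)] with x hx1
      have hx0 : (0:ℝ) < x := by linarith
      have hwp := w_pos s x
      have hrp := Real.rpow_pos_of_pos hx0 n
      rw [Real.norm_eq_abs, abs_of_nonneg (by positivity)]
      have h1 : w s x ≤ Real.exp (s^2/2) * Real.exp (-(1/8) * x) := by
        rw [← Real.exp_add]
        apply Real.exp_le_exp.2
        have hx4 : x ≤ x ^ 4 := by nlinarith [sq_nonneg x, sq_nonneg (x-1), sq_nonneg (x^2-1), sq_nonneg (x^2-x)]
        nlinarith [sq_nonneg (x^2 + 2*s)]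
      calc x ^ n * w s x ≤ x ^ n * (Real.exp (s^2/2) * Real.exp (-(1/8) * x)) :=
            mul_le_mul_of_nonneg_left h1 hrp.le
        _ = Real.exp (s^2/2) * (x ^ n * Real.exp (-(1/8) * x)) := by ring
    have hz : Tendsto (fun x : ℝ => Real.exp (s^2/2) * (x ^ n * Real.exp (-(1/8) * x)))
        atTop (nhds 0) := by
      have := (tendsto_rpow_mul_exp_neg_mul_atTop_nhds_zero n (1/8) (by norm_num)).const_mul
        (Real.exp (s^2/2))
      simpa using this
    exact squeeze_zero_norm' hbound hz
  have := MeasureTheory.integral_Ioi_of_hasDerivAt_of_tendsto hcont hderiv hint htend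
  have hF0 : F 0 = 0 := by
    simp [hF, Real.zero_rpow (ne_of_gt hn)]
  rw [hF0, sub_zero] at this
  have hA : Integrable (fun x : ℝ => n * (x ^ (n-1) * w s x)) (volume.restrict (Ioi 0)) :=
    (integrable_I s (n-1) (by linarith)).const_mul n
  have h2 : Integrable (fun x : ℝ => x ^ (n+3) * w s x) (volume.restrict (Ioi 0)) :=
    integrable_I s (n+3) (by linarith)
  have h3 : Integrable (fun x : ℝ => s * (x ^ (n+1) * w s x)) (volume.restrict (Ioi 0)) :=
    (integrable_I s (n+1) (by linarith)).const_mul s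
  have hB : Integrable (fun x : ℝ => x ^ (n+3) * w s x + s * (x ^ (n+1) * w s x))
      (volume.restrict (Ioi 0)) := h2.add h3
  simp only [hF'] at this
  rw [MeasureTheory.integral_sub hA hB, MeasureTheory.integral_add h2 h3,
    integral_const_mul, integral_const_mul] at this
  linarith [this]

lemma cheb (s m n : ℝ) (hm : 0 < m) (hmn : m < n) :
    (∫ x in Ioi (0:ℝ), x ^ (n+1) * w s x) * (∫ x in Ioi (0:ℝ), x ^ (m+3) * w s x)
      < (∫ x in Ioi (0:ℝ), x ^ (m+1) * w s x) * (∫ x in Ioi (0:ℝ), x ^ (n+3) * w s x) := by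
  set Im1 := ∫ x in Ioi (0:ℝ), x ^ (m+1) * w s x with hIm1
  set Im3 := ∫ x in Ioi (0:ℝ), x ^ (m+3) * w s x with hIm3
  set In1 := ∫ x in Ioi (0:ℝ), x ^ (n+1) * w s x with hIn1
  set In3 := ∫ x in Ioi (0:ℝ), x ^ (n+3) * w s x with hIn3
  have hm1 : (0:ℝ) < Im1 := I_pos' s (m+1) (by linarith)
  have hm3 : (0:ℝ) < Im3 := I_pos' s (m+3) (by linarith)
  have hn1 : (0:ℝ) < In1 := I_pos' s (n+1) (by linarith)
  have hn3 : (0:ℝ) < In3 := I_pos' s (n+3) (by linarith)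
  set c := Real.sqrt (Im3 / Im1) with hcdef
  have hc : 0 < c := Real.sqrt_pos.2 (div_pos hm3 hm1)
  have hc2 : c ^ 2 = Im3 / Im1 := Real.sq_sqrt (div_pos hm3 hm1).le
  set G : ℝ → ℝ := fun x =>
    (x ^ (m+1) * w s x) * ((x ^ 2 - c ^ 2) * (x ^ (n-m) - c ^ (n-m))) with hG
  set H : ℝ → ℝ := fun x =>
    x ^ (n+3) * w s x - c ^ 2 * (x ^ (n+1) * w s x)
      - c ^ (n-m) * (x ^ (m+3) * w s x) + c ^ 2 * c ^ (n-m) * (x ^ (m+1) * w s x) with hH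
  have hGeq : EqOn G H (Ioi 0) := by
    intro x hx
    have hx0 : 0 < x := hx
    have e1 : x ^ (m+1) * x ^ 2 = x ^ (m+3) := by
      rw [← Real.rpow_natCast x 2, ← Real.rpow_add hx0]
      congr 1
      push_cast
      ring
    have e2 : x ^ (m+1) * x ^ (n-m) = x ^ (n+1) := by
      rw [← Real.rpow_add hx0]
      congr 1
      ring
    have e3 : x ^ (m+1) * (x ^ 2 * x ^ (n-m)) = x ^ (n+3) := by
      rw [← Real.rpow_natCast x 2, ← Real.rpow_add hx0, ← Real.rpow_add hx0]
      congr 1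
      push_cast
      ring
    simp only [hG, hH]
    linear_combination (w s x) * e3 - (c ^ (n-m) * w s x) * e1 - (c ^ 2 * w s x) * e2
  have hHint : IntegrableOn H (Ioi 0) := by
    apply Integrable.add
    · apply Integrable.sub
      · apply Integrable.sub (integrable_I s (n+3) (by linarith))
        exact (integrable_I s (n+1) (by linarith)).const_mul _
      · exact (integrable_I s (m+3) (by linarith)).const_mul _
    · exact (integrable_I s (m+1) (by linarith)).const_mul _
  have hGint : IntegrableOn G (Ioi 0) := hHint.congr_fun hGeq.symm measurableSet_Ioi
  have hGpos : 0 < ∫ x in Ioi (0:ℝ), G x := by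
    rw [setIntegral_pos_iff_support_of_nonneg_ae ?_ hGint]
    · refine lt_of_lt_of_le ?_ (measure_mono (show Ioi c ⊆ _ from fun x hx => ?_))
      · simp [Real.volume_Ioi]
      · have hcx : c < x := hx
        have hx0 : 0 < x := hc.trans hcx
        refine ⟨ne_of_gt ?_, hc.trans hcx⟩
        have hA : 0 < x ^ (m+1) * w s x :=
          mul_pos (Real.rpow_pos_of_pos hx0 (m+1)) (w_pos s x)
        have hB : 0 < x ^ 2 - c ^ 2 := by nlinarith
        have hC : 0 < x ^ (n-m) - c ^ (n-m) :=
          sub_pos.2 (Real.rpow_lt_rpow hc.le hcx (by linarith))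
        exact mul_pos hA (mul_pos hB hC)
    · filter_upwards [ae_restrict_mem measurableSet_Ioi] with x hx
      have hx0 : 0 < x := hx
      have hA : 0 ≤ x ^ (m+1) * w s x :=
        (mul_pos (Real.rpow_pos_of_pos hx0 (m+1)) (w_pos s x)).le
      refine mul_nonneg hA ?_
      rcases le_or_gt x c with h | h
      · have h2 : x ^ 2 ≤ c ^ 2 := by nlinarith
        have hr : x ^ (n-m) ≤ c ^ (n-m) := Real.rpow_le_rpow hx0.le h (by linarith)
        have := mul_nonneg (by linarith : (0:ℝ) ≤ c ^ 2 - x ^ 2)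
          (by linarith : (0:ℝ) ≤ c ^ (n-m) - x ^ (n-m))
        nlinarith
      · have h2 : c ^ 2 ≤ x ^ 2 := by nlinarith
        have hr : c ^ (n-m) ≤ x ^ (n-m) := Real.rpow_le_rpow hc.le h.le (by linarith)
        exact mul_nonneg (by linarith) (by linarith)
  have hi1 : Integrable (fun x : ℝ => x ^ (n+3) * w s x) (volume.restrict (Ioi 0)) :=
    integrable_I s (n+3) (by linarith)
  have hi2 : Integrable (fun x : ℝ => c ^ 2 * (x ^ (n+1) * w s x)) (volume.restrict (Ioi 0)) :=
    (integrable_I s (n+1) (by linarith)).const_mul _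
  have hi3 : Integrable (fun x : ℝ => c ^ (n-m) * (x ^ (m+3) * w s x)) (volume.restrict (Ioi 0)) :=
    (integrable_I s (m+3) (by linarith)).const_mul _
  have hi4 : Integrable (fun x : ℝ => c ^ 2 * c ^ (n-m) * (x ^ (m+1) * w s x))
      (volume.restrict (Ioi 0)) := (integrable_I s (m+1) (by linarith)).const_mul _
  have hd1 : Integrable (fun x : ℝ => x ^ (n+3) * w s x - c ^ 2 * (x ^ (n+1) * w s x))
      (volume.restrict (Ioi 0)) := hi1.sub hi2
  have hd2 : Integrable (fun x : ℝ => x ^ (n+3) * w s x - c ^ 2 * (x ^ (n+1) * w s x)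
      - c ^ (n-m) * (x ^ (m+3) * w s x)) (volume.restrict (Ioi 0)) := hd1.sub hi3
  have hval : ∫ x in Ioi (0:ℝ), G x
      = In3 - c ^ 2 * In1 - c ^ (n-m) * Im3 + c ^ 2 * c ^ (n-m) * Im1 := by
    rw [setIntegral_congr_fun measurableSet_Ioi hGeq]
    simp only [hH]
    rw [MeasureTheory.integral_add hd2 hi4, MeasureTheory.integral_sub hd1 hi3,
      MeasureTheory.integral_sub hi1 hi2,
      integral_const_mul, integral_const_mul, integral_const_mul]
  rw [hval] at hGpos
  rw [hc2] at hGpos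
  have hcancel2 : Im3 / Im1 * c ^ (n-m) * Im1 = c ^ (n-m) * Im3 := by
    field_simp
  have hkey : 0 < In3 - Im3 / Im1 * In1 := by linarith
  calc In1 * Im3 = (Im3 / Im1 * In1) * Im1 := by field_simp
    _ < In3 * Im1 := by nlinarith
    _ = Im1 * In3 := by ring

lemma I_eq (k s : ℝ) : I k s = ∫ x in Ioi (0:ℝ), x ^ k * w s x := rfl

/-- For every fixed `s`, the universal profile is strictly decreasing in its index on `(0,∞)`. -/
theorem universal_profile_strict_anti_in_n (s : ℝ) :
    ∀ m n : ℝ, 0 < m → m < n → f n s < f m s := by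
  intro m n hm hmn
  have hn : 0 < n := hm.trans hmn
  have hpos : ∀ k : ℝ, -1 < k → 0 < I k s := fun k hk => by
    rw [I_eq]; exact I_pos' s k hk
  have hm1 := hpos (m-1) (by linarith)
  have hn1 := hpos (n-1) (by linarith)
  have hmp1 := hpos (m+1) (by linarith)
  have hnp1 := hpos (n+1) (by linarith)
  have hibpm : m * I (m-1) s = I (m+3) s + s * I (m+1) s := by
    simp only [I_eq]
    have := ibp s m hm
    convert this using 3 <;> ring
  have hibpn : n * I (n-1) s = I (n+3) s + s * I (n+1) s := by
    simp only [I_eq]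
    have := ibp s n hn
    convert this using 3 <;> ring
  have hcheb : I (n+1) s * I (m+3) s < I (m+1) s * I (n+3) s := by
    simp only [I_eq]
    exact cheb s m n hm hmn
  have hdm : 0 < m * I (m-1) s := mul_pos hm hm1
  have hdn : 0 < n * I (n-1) s := mul_pos hn hn1
  rw [f, f, div_lt_div_iff₀ hdn hdm]
  rw [hibpm, hibpn]
  nlinarith [hcheb, mul_pos hmp1 hnp1]
end

section
/- For every real n > 0 and every s ∈ ℝ, the integration-by-parts identity n · I_{n−1}(s) = I_{n+3}(s) + s · I_{n+1}(s) holds. -/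
open MeasureTheory

lemma exp_bound (s x : ℝ) :
    Real.exp (-x ^ 4 / 4 - s * x ^ 2 / 2) ≤ Real.exp (s ^ 2 / 2) * Real.exp (-(1/8) * x ^ 4) := by
  rw [← Real.exp_add]
  apply Real.exp_le_exp.2
  nlinarith [sq_nonneg (s + x ^ 2 / 2)]

lemma I_integrable (k s : ℝ) (hk : -1 < k) :
    IntegrableOn (fun x : ℝ => x ^ k * Real.exp (-x ^ 4 / 4 - s * x ^ 2 / 2)) (Set.Ioi 0) := by
  have hg : IntegrableOn (fun x : ℝ =>
      Real.exp (s ^ 2 / 2) * (x ^ k * Real.exp (-(1/8) * x ^ (4:ℝ)))) (Set.Ioi 0) :=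
    (integrableOn_rpow_mul_exp_neg_mul_rpow hk (by norm_num : (0:ℝ) < 4)
      (by norm_num : (0:ℝ) < 1/8)).const_mul _
  refine Integrable.mono' hg ?_ ?_
  · apply ContinuousOn.aestronglyMeasurable ?_ measurableSet_Ioi
    apply ContinuousOn.mul
    · exact fun x hx => (Real.continuousAt_rpow_const x k
        (Or.inl (ne_of_gt hx))).continuousWithinAt
    · exact (Real.continuous_exp.comp (by continuity)).continuousOn
  · filter_upwards [ae_restrict_mem measurableSet_Ioi] with x hx
    have hx0 : (0:ℝ) < x := hx
    have h4 : x ^ (4:ℝ) = x ^ (4:ℕ) := by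
      rw [← Real.rpow_natCast x 4]; norm_num
    rw [Real.norm_eq_abs, abs_mul, abs_of_nonneg (Real.rpow_nonneg hx0.le k),
      abs_of_nonneg (Real.exp_pos _).le, h4]
    calc x ^ k * Real.exp (-x ^ 4 / 4 - s * x ^ 2 / 2)
        ≤ x ^ k * (Real.exp (s ^ 2 / 2) * Real.exp (-(1/8) * x ^ 4)) :=
          mul_le_mul_of_nonneg_left (exp_bound s x) (Real.rpow_nonneg hx0.le k)
      _ = Real.exp (s ^ 2 / 2) * (x ^ k * Real.exp (-(1/8) * x ^ 4)) := by ring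

/-- The integration-by-parts identity `n · I_{n-1}(s) = I_{n+3}(s) + s · I_{n+1}(s)`. -/
theorem integration_by_parts_identity (n : ℝ) (hn : 0 < n) (s : ℝ) :
    n * I (n - 1) s = I (n + 3) s + s * I (n + 1) s := by
  set E : ℝ → ℝ := fun x => Real.exp (-x ^ 4 / 4 - s * x ^ 2 / 2) with hE
  set f : ℝ → ℝ := fun x => x ^ n * E x with hf
  set f' : ℝ → ℝ := fun x =>
    n * (x ^ (n - 1) * E x) - ((x ^ (n + 3) * E x) + s * (x ^ (n + 1) * E x)) with hf'
  have hderiv : ∀ x ∈ Set.Ioi (0:ℝ), HasDerivAt f (f' x) x := by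
    intro x hx
    have hx0 : (0:ℝ) < x := hx
    have h1 : HasDerivAt (fun y : ℝ => y ^ n) (n * x ^ (n - 1)) x :=
      Real.hasDerivAt_rpow_const (Or.inl hx0.ne')
    have h2 : HasDerivAt (fun y : ℝ => -y ^ 4 / 4 - s * y ^ 2 / 2)
        (-(4 * x ^ 3) / 4 - s * (2 * x ^ 1) / 2) x := by
      have := (((hasDerivAt_pow 4 x).neg.div_const 4).sub
        (((hasDerivAt_pow 2 x).const_mul s).div_const 2))
      exact this.congr_deriv (by norm_num)
    have hE' : HasDerivAt E (E x * (-(4 * x ^ 3) / 4 - s * (2 * x ^ 1) / 2)) x := by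
      simpa [hE, mul_comm] using h2.exp
    have := h1.mul hE'
    refine this.congr_deriv ?_
    have hr3 : x ^ (n + 3) = x ^ n * x ^ (3:ℕ) := by
      rw [← Real.rpow_natCast x 3, ← Real.rpow_add hx0]; norm_num
    have hr1 : x ^ (n + 1) = x ^ n * x ^ (1:ℕ) := by
      rw [← Real.rpow_natCast x 1, ← Real.rpow_add hx0]; norm_num
    simp only [hf', hr3, hr1]
    ring
  have hcont : ContinuousWithinAt f (Set.Ici 0) 0 := by
    apply ContinuousWithinAt.mul
    · exact (Real.continuousAt_rpow_const 0 n (Or.inr hn.le)).continuousWithinAt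
    · exact (Real.continuous_exp.comp (by continuity)).continuousWithinAt
  have htop : Filter.Tendsto f Filter.atTop (nhds 0) := by
    have hbase : Filter.Tendsto (fun x : ℝ =>
        Real.exp (s ^ 2 / 2) * (x ^ n * Real.exp (-(1/8) * x))) Filter.atTop (nhds 0) := by
      have := (tendsto_rpow_mul_exp_neg_mul_atTop_nhds_zero n (1/8) (by norm_num)).const_mul
        (Real.exp (s ^ 2 / 2))
      simpa using this
    apply squeeze_zero' (g := fun x : ℝ =>
        Real.exp (s ^ 2 / 2) * (x ^ n * Real.exp (-(1/8) * x)))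
      ?_ ?_ hbase
    · filter_upwards [Filter.eventually_ge_atTop (0:ℝ)] with x hx
      exact mul_nonneg (Real.rpow_nonneg hx n) (Real.exp_pos _).le
    · filter_upwards [Filter.eventually_ge_atTop (1:ℝ)] with x hx
      have hx0 : (0:ℝ) ≤ x := by linarith
      have hle : Real.exp (-x ^ 4 / 4 - s * x ^ 2 / 2)
          ≤ Real.exp (s ^ 2 / 2) * Real.exp (-(1/8) * x) := by
        calc Real.exp (-x ^ 4 / 4 - s * x ^ 2 / 2)
            ≤ Real.exp (s ^ 2 / 2) * Real.exp (-(1/8) * x ^ 4) := exp_bound s x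
          _ ≤ Real.exp (s ^ 2 / 2) * Real.exp (-(1/8) * x) := by
              apply mul_le_mul_of_nonneg_left _ (Real.exp_pos _).le
              apply Real.exp_le_exp.2
              nlinarith [pow_le_pow_right₀ hx (show (1:ℕ) ≤ 4 by norm_num)]
      calc f x = x ^ n * Real.exp (-x ^ 4 / 4 - s * x ^ 2 / 2) := rfl
        _ ≤ x ^ n * (Real.exp (s ^ 2 / 2) * Real.exp (-(1/8) * x)) :=
            mul_le_mul_of_nonneg_left hle (Real.rpow_nonneg hx0 n)
        _ = Real.exp (s ^ 2 / 2) * (x ^ n * Real.exp (-(1/8) * x)) := by ring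
  have hint1 := I_integrable (n - 1) s (by linarith)
  have hint3 := I_integrable (n + 3) s (by linarith)
  have hint2 := I_integrable (n + 1) s (by linarith)
  have hf'int : IntegrableOn f' (Set.Ioi 0) := by
    exact ((hint1.const_mul n).sub (hint3.add (hint2.const_mul s)))
  have key := integral_Ioi_of_hasDerivAt_of_tendsto hcont hderiv hf'int htop
  have hf0 : f 0 = 0 := by
    simp [hf, Real.zero_rpow hn.ne']
  rw [hf0, sub_zero] at key
  have hsplit : ∫ x in Set.Ioi (0:ℝ), f' x
      = n * I (n - 1) s - (I (n + 3) s + s * I (n + 1) s) := by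
    simp only [hf', hE]
    have h1 : IntegrableOn (fun x : ℝ =>
        n * (x ^ (n - 1) * Real.exp (-x ^ 4 / 4 - s * x ^ 2 / 2))) (Set.Ioi 0) :=
      hint1.const_mul n
    have h2s : IntegrableOn (fun x : ℝ =>
        s * (x ^ (n + 1) * Real.exp (-x ^ 4 / 4 - s * x ^ 2 / 2))) (Set.Ioi 0) :=
      hint2.const_mul s
    have h23 : IntegrableOn (fun x : ℝ =>
        x ^ (n + 3) * Real.exp (-x ^ 4 / 4 - s * x ^ 2 / 2) +
          s * (x ^ (n + 1) * Real.exp (-x ^ 4 / 4 - s * x ^ 2 / 2))) (Set.Ioi 0) :=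
      hint3.add h2s
    rw [MeasureTheory.integral_sub h1 h23, MeasureTheory.integral_add hint3 h2s,
      integral_const_mul, integral_const_mul]
    rfl
  rw [hsplit] at key
  linarith
end

section
/- For every real k > −1: (i) lim_{s→+∞} s^{(k+1)/2} · I_k(s) = 2^{(k−1)/2} Γ((k+1)/2), and (ii) lim_{s→−∞} |s|^{−(k−1)/2} e^{−s²/4} · I_k(s) = √π. -/
open MeasureTheory

open Set Filter Real Topology

lemma Jval (k : ℝ) (hk : -1 < k) :
    ∫ y in Ioi (0:ℝ), y ^ k * Real.exp (-y ^ 2 / 2)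
      = (2 : ℝ) ^ ((k - 1) / 2) * Real.Gamma ((k + 1) / 2) := by
  have e : ∫ y in Ioi (0:ℝ), y ^ k * Real.exp (-y ^ 2 / 2)
      = ∫ y in Ioi (0:ℝ), y ^ k * Real.exp (-(1/2) * y ^ (2:ℝ)) := by
    refine setIntegral_congr_fun measurableSet_Ioi fun y hy => ?_
    have h2 : y ^ (2:ℝ) = y ^ (2:ℕ) := by
      rw [show (2:ℝ) = ((2:ℕ):ℝ) by norm_num, Real.rpow_natCast]
    rw [h2, show -(1/2:ℝ) * y ^ (2:ℕ) = -y^2/2 by ring]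
  rw [e, integral_rpow_mul_exp_neg_mul_rpow two_pos hk one_half_pos]
  have h1 : ((1:ℝ)/2) ^ (-(k + 1) / 2) = 2 ^ ((k+1)/2) := by
    rw [one_div, Real.inv_rpow two_pos.le, ← Real.rpow_neg two_pos.le]
    congr 1; ring
  rw [h1]
  rw [show (2:ℝ) ^ ((k+1)/2) * (1/2) = 2 ^ ((k+1)/2) * 2 ^ (-1:ℝ) by norm_num [Real.rpow_neg_one],
    ← Real.rpow_add two_pos]
  congr 2
  ring

lemma part1 (k : ℝ) (hk : -1 < k) :
    Filter.Tendsto (fun s : ℝ => s ^ ((k + 1) / 2) * I k s) Filter.atTop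
      (nhds ((2 : ℝ) ^ ((k - 1) / 2) * Real.Gamma ((k + 1) / 2))) := by
  have hbound : IntegrableOn (fun y : ℝ => y ^ k * Real.exp (-y ^ 2 / 2)) (Ioi 0) := by
    have h := integrableOn_rpow_mul_exp_neg_mul_sq one_half_pos hk
    have : (fun x:ℝ => x ^ k * Real.exp (-(1/2) * x^2)) = fun x:ℝ => x ^ k * Real.exp (-x^2/2) := by
      funext x; rw [show -(1/2:ℝ) * x^2 = -x^2/2 by ring]
    rwa [this] at h
  have hJ : Tendsto (fun s : ℝ => ∫ y in Ioi (0:ℝ), y ^ k * Real.exp (-y^4/(4*s^2) - y^2/2))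
      atTop (nhds (∫ y in Ioi (0:ℝ), y ^ k * Real.exp (-y ^ 2 / 2))) := by
    refine tendsto_integral_filter_of_dominated_convergence
      (fun y => y ^ k * Real.exp (-y ^ 2 / 2)) ?_ ?_ hbound ?_
    · filter_upwards with s
      apply Measurable.aestronglyMeasurable
      fun_prop
    · filter_upwards [eventually_gt_atTop (0:ℝ)] with s hs
      refine (ae_restrict_iff' measurableSet_Ioi).mpr (ae_of_all _ fun y hy => ?_)
      have hy0 : (0:ℝ) < y := hy
      rw [Real.norm_eq_abs, abs_of_nonneg (by positivity)]
      have h4 : (0:ℝ) ≤ y^4/(4*s^2) := by positivity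
      have h5 : -y ^ 4 / (4 * s ^ 2) = -(y ^ 4 / (4 * s ^ 2)) := neg_div _ _
      exact mul_le_mul_of_nonneg_left
        (Real.exp_le_exp.mpr (by linarith)) (Real.rpow_nonneg hy0.le k)
    · refine ae_of_all _ fun y => ?_
      have h1 : Tendsto (fun s:ℝ => -y^4/(4*s^2)) atTop (nhds 0) :=
        Tendsto.div_atTop tendsto_const_nhds
          (Tendsto.const_mul_atTop four_pos (tendsto_pow_atTop two_ne_zero))
      have h2 := h1.sub (tendsto_const_nhds (x := y^2/2) (f := atTop))
      rw [show (0:ℝ) - y^2/2 = -y^2/2 by ring] at h2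
      exact ((Real.continuous_exp.tendsto _).comp h2).const_mul _
  rw [Jval k hk] at hJ
  refine Tendsto.congr' ?_ hJ
  filter_upwards [eventually_gt_atTop (0:ℝ)] with s hs
  set r := Real.sqrt s with hrdef
  have hr : 0 < r := Real.sqrt_pos.mpr hs
  have h2 : r ^ 2 = s := Real.sq_sqrt hs.le
  have hsub := integral_comp_mul_left_Ioi
    (fun x => x ^ k * Real.exp (-x ^ 4 / 4 - s * x ^ 2 / 2)) 0 (inv_pos.mpr hr)
  simp only [mul_zero, inv_inv, smul_eq_mul] at hsub
  have hcg : ∫ x in Ioi (0:ℝ), (r⁻¹ * x) ^ k * Real.exp (-(r⁻¹*x) ^ 4 / 4 - s * (r⁻¹*x) ^ 2 / 2)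
      = (r⁻¹) ^ k * ∫ y in Ioi (0:ℝ), y ^ k * Real.exp (-y^4/(4*s^2) - y^2/2) := by
    rw [← integral_const_mul]
    refine setIntegral_congr_fun measurableSet_Ioi fun y hy => ?_
    have hy0 : (0:ℝ) < y := hy
    rw [Real.mul_rpow (inv_nonneg.mpr hr.le) hy0.le]
    have hr4 : (r⁻¹ * y) ^ 4 = y ^ 4 / s ^ 2 := by
      rw [mul_pow, ← h2]; field_simp
    have hr2 : s * (r⁻¹ * y) ^ 2 = y ^ 2 := by
      rw [mul_pow, ← h2]; field_simp
    rw [hr4, hr2, show -(y^4/s^2)/4 - y^2/2 = -y^4/(4*s^2) - y^2/2 by ring]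
    ring
  -- hsub : ∫ x in Ioi 0, f (r⁻¹ * x) = r * I k s
  have hI : (r⁻¹) ^ k * (∫ y in Ioi (0:ℝ), y ^ k * Real.exp (-y^4/(4*s^2) - y^2/2)) = r * I k s := by
    rw [← hcg, hsub]; rfl
  have hrk : s ^ ((k+1)/2) = r ^ (k+1) := by
    rw [← h2, ← Real.rpow_natCast r 2, ← Real.rpow_mul hr.le]
    congr 1; push_cast; ring
  have hfinal : s ^ ((k+1)/2) * I k s
      = ∫ y in Ioi (0:ℝ), y ^ k * Real.exp (-y^4/(4*s^2) - y^2/2) := by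
    have e1 : s ^ ((k+1)/2) * I k s = r ^ k * (r * I k s) := by
      rw [hrk, Real.rpow_add hr, Real.rpow_one]; ring
    rw [e1, ← hI, Real.inv_rpow hr.le, ← mul_assoc,
      mul_inv_cancel₀ (ne_of_gt (Real.rpow_pos_of_pos hr k)), one_mul]
  exact hfinal.symm

/-- Gaussian integrability helper. -/
lemma int_exp_neg_sq : Integrable (fun v : ℝ => Real.exp (-v ^ 2)) := by
  have h := integrable_exp_neg_mul_sq (b := 1) one_pos
  simpa using h

lemma int_abs_rpow {c : ℝ} (hc : 0 ≤ c) :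
    Integrable (fun v : ℝ => |v| ^ c * Real.exp (-v ^ 2)) := by
  have h1 : IntegrableOn (fun v : ℝ => |v| ^ c * Real.exp (-v ^ 2)) (Ioi 0) := by
    have h := integrableOn_rpow_mul_exp_neg_mul_sq one_pos
      (lt_of_lt_of_le neg_one_lt_zero hc)
    refine h.congr_fun (fun x hx => ?_) measurableSet_Ioi
    beta_reduce; rw [abs_of_pos hx, neg_one_mul]
  have h2 : IntegrableOn (fun v : ℝ => |v| ^ c * Real.exp (-v ^ 2)) (Iio 0) := by
    rw [← (Measure.measurePreserving_neg (volume : Measure ℝ)).integrableOn_comp_preimage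
        (Homeomorph.neg ℝ).measurableEmbedding]
    simp only [Function.comp_def, abs_neg, neg_sq, neg_preimage, neg_Iio, neg_zero]
    exact h1
  rw [← integrableOn_univ, ← Set.Iio_union_Ici (a := (0:ℝ)), integrableOn_union,
    integrableOn_Ici_iff_integrableOn_Ioi]
  exact ⟨h2, h1⟩

lemma int_gbound {c : ℝ} (hc : 0 ≤ c) :
    Integrable (fun v : ℝ => (1 + 2 * |v|) ^ c * Real.exp (-v ^ 2)) := by
  have hB : Integrable (fun v : ℝ =>
      3 ^ c * Real.exp (-v ^ 2) + 3 ^ c * (|v| ^ c * Real.exp (-v ^ 2))) :=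
    (int_exp_neg_sq.const_mul _).add ((int_abs_rpow hc).const_mul _)
  refine hB.mono' (Measurable.aestronglyMeasurable (by fun_prop)) (ae_of_all _ fun v => ?_)
  have hE : (0:ℝ) < Real.exp (-v ^ 2) := Real.exp_pos _
  rw [Real.norm_eq_abs, abs_of_nonneg (by positivity)]
  rcases le_total |v| 1 with h | h
  · have h3 : (1 + 2 * |v|) ^ c ≤ 3 ^ c :=
      Real.rpow_le_rpow (by positivity) (by linarith) hc
    have h4 : (0:ℝ) ≤ 3 ^ c * (|v| ^ c * Real.exp (-v ^ 2)) := by positivity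
    nlinarith [mul_le_mul_of_nonneg_right h3 hE.le]
  · have h13 : 1 + 2 * |v| ≤ 3 * |v| := by linarith
    have h3 : (1 + 2 * |v|) ^ c ≤ (3 * |v|) ^ c :=
      Real.rpow_le_rpow (by positivity) h13 hc
    rw [Real.mul_rpow (by norm_num) (abs_nonneg v)] at h3
    have h4 : (0:ℝ) ≤ 3 ^ c * Real.exp (-v ^ 2) := by positivity
    nlinarith [mul_le_mul_of_nonneg_right h3 hE.le]

/-- Pointwise bound on the main region. -/
lemma ptbound {a s v : ℝ} (hs : s ≤ -1) (hv : s / 4 < v) :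
    ((2 * v - s) / (-s)) ^ a * Real.exp (-v ^ 2)
      ≤ 2 ^ |a| * ((1 + 2 * |v|) ^ |a| * Real.exp (-v ^ 2)) := by
  have hns : (0:ℝ) < -s := by linarith
  have hE : (0:ℝ) < Real.exp (-v ^ 2) := Real.exp_pos _
  set r := (2 * v - s) / (-s) with hrdef
  have hr_lb : (1:ℝ)/2 ≤ r := by
    rw [hrdef, le_div_iff₀ hns]; linarith
  have hr0 : (0:ℝ) ≤ r := by linarith
  have hr_ub : r ≤ 1 + 2 * |v| := by
    rw [hrdef, div_le_iff₀ hns]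
    have h1 : v ≤ |v| := le_abs_self v
    have h2 : (1:ℝ) ≤ -s := by linarith
    nlinarith [abs_nonneg v]
  have h2c : (1:ℝ) ≤ 2 ^ |a| := by
    calc (1:ℝ) = 2 ^ (0:ℝ) := (Real.rpow_zero 2).symm
    _ ≤ 2 ^ |a| := Real.rpow_le_rpow_of_exponent_le one_le_two (abs_nonneg a)
  have h1v : (1:ℝ) ≤ (1 + 2 * |v|) ^ |a| := by
    calc (1:ℝ) = (1 + 2 * |v|) ^ (0:ℝ) := (Real.rpow_zero _).symm
    _ ≤ (1 + 2 * |v|) ^ |a| :=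
      Real.rpow_le_rpow_of_exponent_le (by nlinarith [abs_nonneg v]) (abs_nonneg a)
  rcases le_or_gt 0 a with ha | ha
  · have hra : r ^ a ≤ (1 + 2 * |v|) ^ |a| := by
      rw [abs_of_nonneg ha]
      exact Real.rpow_le_rpow hr0 hr_ub ha
    calc r ^ a * Real.exp (-v ^ 2) ≤ (1 + 2 * |v|) ^ |a| * Real.exp (-v ^ 2) :=
          mul_le_mul_of_nonneg_right hra hE.le
      _ ≤ 2 ^ |a| * ((1 + 2 * |v|) ^ |a| * Real.exp (-v ^ 2)) :=
          le_mul_of_one_le_left (by positivity) h2c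
  · have hra : r ^ a ≤ 2 ^ |a| := by
      have h5 : r ^ a ≤ ((1:ℝ)/2) ^ a :=
        Real.rpow_le_rpow_of_nonpos (by norm_num) hr_lb ha.le
      have h6 : ((1:ℝ)/2) ^ a = 2 ^ (-a) := by
        rw [one_div, Real.inv_rpow two_pos.le, ← Real.rpow_neg two_pos.le]
      rw [abs_of_neg ha]
      rw [h6] at h5; exact h5
    calc r ^ a * Real.exp (-v ^ 2) ≤ 2 ^ |a| * Real.exp (-v ^ 2) :=
          mul_le_mul_of_nonneg_right hra hE.le
      _ ≤ 2 ^ |a| * ((1 + 2 * |v|) ^ |a| * Real.exp (-v ^ 2)) := by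
          rw [mul_le_mul_iff_of_pos_left (by positivity)]
          exact le_mul_of_one_le_left hE.le h1v

/-- Representation of the normalized integral for `s < 0`. -/
lemma Irep (k s : ℝ) (hs : s < 0) :
    |s| ^ (-((k - 1) / 2)) * Real.exp (-s ^ 2 / 4) * I k s
      = ∫ v in Ioi (s / 2), ((2 * v - s) / (-s)) ^ ((k - 1) / 2) * Real.exp (-v ^ 2) := by
  have hns : (0:ℝ) < -s := by linarith
  -- Step 1 : substitution y = x²
  have h1 : I k s = 2⁻¹ * ∫ y in Ioi (0:ℝ), y ^ ((k - 1) / 2) * Real.exp (-y ^ 2 / 4 - s * y / 2) := by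
    rw [← integral_comp_rpow_Ioi_of_pos
      (g := fun y : ℝ => y ^ ((k - 1) / 2) * Real.exp (-y ^ 2 / 4 - s * y / 2)) (p := 2) two_pos]
    have hcg : ∫ x in Ioi (0:ℝ), ((2:ℝ) * x ^ ((2:ℝ) - 1)) •
          ((x ^ (2:ℝ)) ^ ((k - 1) / 2) * Real.exp (-(x ^ (2:ℝ)) ^ 2 / 4 - s * (x ^ (2:ℝ)) / 2))
        = ∫ x in Ioi (0:ℝ), 2 * (x ^ k * Real.exp (-x ^ 4 / 4 - s * x ^ 2 / 2)) := by
      refine setIntegral_congr_fun measurableSet_Ioi fun x hx => ?_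
      have hx0 : (0:ℝ) < x := hx
      have e2 : x ^ (2:ℝ) = x ^ (2:ℕ) := by
        rw [show (2:ℝ) = ((2:ℕ):ℝ) by norm_num, Real.rpow_natCast]
      have e1 : (x ^ (2:ℝ)) ^ ((k - 1) / 2) = x ^ (k - 1) := by
        rw [← Real.rpow_mul hx0.le]
        congr 1; ring
      have e3 : x * x ^ (k - 1) = x ^ k := by
        have h' := Real.rpow_add hx0 1 (k - 1)
        rw [Real.rpow_one] at h'
        rw [← h', show (1:ℝ) + (k - 1) = k by ring]
      rw [smul_eq_mul, show ((2:ℝ) - 1) = (1:ℝ) by norm_num, Real.rpow_one, e1, e2,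
        show -((x:ℝ) ^ (2:ℕ)) ^ 2 / 4 - s * x ^ (2:ℕ) / 2 = -x ^ 4 / 4 - s * x ^ 2 / 2 by ring,
        ← e3]
      ring
    rw [hcg, integral_const_mul, ← mul_assoc]
    norm_num
    rfl
  -- Step 2 : completing the square
  have h2 : Real.exp (-s ^ 2 / 4) * ∫ y in Ioi (0:ℝ), y ^ ((k - 1) / 2) * Real.exp (-y ^ 2 / 4 - s * y / 2)
      = ∫ y in Ioi (0:ℝ), y ^ ((k - 1) / 2) * Real.exp (-(y + s) ^ 2 / 4) := by
    rw [← integral_const_mul]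
    refine setIntegral_congr_fun measurableSet_Ioi fun y _ => ?_
    rw [show Real.exp (-s ^ 2 / 4) * (y ^ ((k - 1) / 2) * Real.exp (-y ^ 2 / 4 - s * y / 2))
        = y ^ ((k - 1) / 2) * (Real.exp (-s ^ 2 / 4) * Real.exp (-y ^ 2 / 4 - s * y / 2)) by ring,
      ← Real.exp_add, show -s ^ 2 / 4 + (-y ^ 2 / 4 - s * y / 2) = -(y + s) ^ 2 / 4 by ring]
  -- Step 3 : affine substitution y = 2v - s
  set g2 : ℝ → ℝ := fun y => y ^ ((k - 1) / 2) * Real.exp (-(y + s) ^ 2 / 4) with hg2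
  have h3 : ∫ y in Ioi (0:ℝ), g2 y = 2 * ∫ v in Ioi (s / 2), g2 (2 * v - s) := by
    have e2 : ∀ v : ℝ, (Ioi (0:ℝ)).indicator g2 (2 * v - s)
        = (Ioi (s / 2)).indicator (fun v => g2 (2 * v - s)) v := by
      intro v
      by_cases h : s / 2 < v
      · rw [Set.indicator_of_mem (Set.mem_Ioi.mpr (by linarith : (0:ℝ) < 2 * v - s)),
          Set.indicator_of_mem (Set.mem_Ioi.mpr h)]
      · push_neg at h
        rw [Set.indicator_of_notMem (fun hc => absurd (Set.mem_Ioi.mp hc) (by push_neg; linarith)),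
          Set.indicator_of_notMem (fun hc => absurd (Set.mem_Ioi.mp hc) (not_lt.mpr h))]
    have e3 : ∫ v : ℝ, (Ioi (0:ℝ)).indicator g2 (2 * v - s)
        = 2⁻¹ * ∫ y : ℝ, (Ioi (0:ℝ)).indicator g2 y := by
      have h4 := MeasureTheory.Measure.integral_comp_mul_left
        (fun x => (Ioi (0:ℝ)).indicator g2 (x - s)) 2
      simp only [smul_eq_mul] at h4
      rw [show |(2:ℝ)⁻¹| = 2⁻¹ by norm_num] at h4
      rw [h4, integral_sub_right_eq_self (fun y => (Ioi (0:ℝ)).indicator g2 y) s]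
    rw [← integral_indicator measurableSet_Ioi,
      show (∫ y : ℝ, (Ioi (0:ℝ)).indicator g2 y)
        = 2 * ∫ v : ℝ, (Ioi (0:ℝ)).indicator g2 (2 * v - s) from by rw [e3]; ring]
    congr 1
    rw [show (fun v : ℝ => (Ioi (0:ℝ)).indicator g2 (2 * v - s))
        = fun v => (Ioi (s / 2)).indicator (fun v => g2 (2 * v - s)) v from funext e2,
      integral_indicator measurableSet_Ioi]
  -- Assemble
  rw [h1, show |s| ^ (-((k - 1) / 2)) * Real.exp (-s ^ 2 / 4)
        * (2⁻¹ * ∫ y in Ioi (0:ℝ), y ^ ((k - 1) / 2) * Real.exp (-y ^ 2 / 4 - s * y / 2))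
      = |s| ^ (-((k - 1) / 2)) * 2⁻¹ * (Real.exp (-s ^ 2 / 4)
        * ∫ y in Ioi (0:ℝ), y ^ ((k - 1) / 2) * Real.exp (-y ^ 2 / 4 - s * y / 2)) by ring,
    h2]
  rw [show (∫ y in Ioi (0:ℝ), y ^ ((k - 1) / 2) * Real.exp (-(y + s) ^ 2 / 4))
      = ∫ y in Ioi (0:ℝ), g2 y from rfl, h3, show |s| ^ (-((k - 1) / 2)) * 2⁻¹
      * (2 * ∫ v in Ioi (s / 2), g2 (2 * v - s))
      = |s| ^ (-((k - 1) / 2)) * ∫ v in Ioi (s / 2), g2 (2 * v - s) by ring,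
    ← integral_const_mul]
  refine setIntegral_congr_fun measurableSet_Ioi fun v hv => ?_
  have hv2 : (0:ℝ) < 2 * v - s := by
    have := Set.mem_Ioi.mp hv; linarith
  rw [hg2]
  simp only []
  rw [show (2 * v - s + s) = 2 * v by ring, show -(2 * v) ^ 2 / 4 = -v ^ 2 from by ring,
    abs_of_neg hs, Real.div_rpow hv2.le hns.le, Real.rpow_neg hns.le]
  field_simp

lemma ratio_affine {s : ℝ} (hs0 : s ≠ 0) (v : ℝ) :
    (-2/s) * v + 1 = (2 * v - s) / (-s) := by
  rw [eq_div_iff (neg_ne_zero.mpr hs0)]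
  field_simp
  ring

lemma intOn_ratio {a : ℝ} (ha : -1 < a) {s : ℝ} (hs : s < 0) :
    IntegrableOn (fun v : ℝ => ((2 * v - s) / (-s)) ^ a) (Ioc (s/2) (s/4)) := by
  have hs0 : s ≠ 0 := hs.ne
  have base : IntervalIntegrable (fun w : ℝ => w ^ a) volume 0 (1/2) := intervalIntegral.intervalIntegrable_rpow' ha
  have b2 := base.comp_add_right 1
  have b3 := b2.comp_mul_left (c := -2/s)
  have hc : (-2:ℝ)/s ≠ 0 := div_ne_zero (by norm_num) hs0
  have e1 : ((0:ℝ) - 1)/(-2/s) = s/2 := by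
    rw [div_div_eq_mul_div]
    field_simp
    ring
  have e2 : ((1:ℝ)/2 - 1)/(-2/s) = s/4 := by
    rw [div_div_eq_mul_div]
    field_simp
    ring
  rw [e1, e2] at b3
  refine (b3.1).congr_fun (fun v _ => ?_) measurableSet_Ioc
  beta_reduce; rw [ratio_affine hs0 v]

lemma Pval {a : ℝ} (ha : -1 < a) {s : ℝ} (hs : s < 0) :
    ∫ v in Ioc (s/2) (s/4), ((2 * v - s) / (-s)) ^ a
      = -s/2 * (((1:ℝ)/2) ^ (a+1) / (a+1)) := by
  have hs0 : s ≠ 0 := hs.ne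
  have h0 : s/2 ≤ s/4 := by linarith
  have hc : (-2:ℝ)/s ≠ 0 := div_ne_zero (by norm_num) hs0
  have k1 : (-2/s) * (s/2) + 1 = (0:ℝ) := by field_simp; ring
  have k2 : (-2/s) * (s/4) + 1 = (1:ℝ)/2 := by field_simp; ring
  have k3 : ((-2:ℝ)/s)⁻¹ = -s/2 := by rw [inv_div]; ring
  rw [← intervalIntegral.integral_of_le h0]
  rw [intervalIntegral.integral_congr (g := fun v : ℝ => ((-2/s) * v + 1) ^ a)
    (fun v _ => by beta_reduce; rw [ratio_affine hs0 v])]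
  rw [intervalIntegral.integral_comp_mul_add (fun w : ℝ => w ^ a) hc 1, k1, k2]
  rw [integral_rpow (Or.inl ha), Real.zero_rpow (by linarith : a + 1 ≠ 0),
    smul_eq_mul, k3]
  ring

lemma intOn_tail {a : ℝ} (ha : -1 < a) {s : ℝ} (hs : s < 0) :
    IntegrableOn (fun v : ℝ => ((2 * v - s)/(-s)) ^ a * Real.exp (-v ^ 2)) (Ioc (s/2) (s/4)) := by
  have hm : AEStronglyMeasurable (fun v : ℝ => Real.exp (-v ^ 2))
      (volume.restrict (Ioc (s/2) (s/4))) := Measurable.aestronglyMeasurable (by fun_prop)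
  have h := Integrable.bdd_mul (intOn_ratio ha hs) hm
    (c := 1) (ae_of_all _ fun x => by
      rw [Real.norm_eq_abs, abs_of_pos (Real.exp_pos _)]
      exact Real.exp_le_one_iff.mpr (neg_nonpos.mpr (sq_nonneg x)))
  exact h.congr (ae_of_all _ fun v => mul_comm _ _)

lemma tail_tendsto {a : ℝ} (ha : -1 < a) :
    Tendsto (fun s : ℝ => ∫ v in Ioc (s/2) (s/4), ((2*v - s)/(-s)) ^ a * Real.exp (-v ^ 2))
      atBot (𝓝 0) := by
  have ha1 : (0:ℝ) < a + 1 := by linarith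
  have hU : Tendsto (fun s : ℝ =>
      Real.exp (-s^2/16) * (-s/2 * (((1:ℝ)/2) ^ (a+1) / (a+1)))) atBot (𝓝 0) := by
    have key : Tendsto (fun t : ℝ => t * Real.exp (-t^2/16)) atTop (𝓝 0) := by
      have upper : Tendsto (fun t : ℝ => 4 * (t^2/16 * Real.exp (-(t^2/16)))) atTop (𝓝 0) := by
        have g1 : Tendsto (fun u : ℝ => u * Real.exp (-u)) atTop (𝓝 0) := by
          have := Real.tendsto_pow_mul_exp_neg_atTop_nhds_zero 1
          simpa using this
        have g2 : Tendsto (fun t : ℝ => t^2/16) atTop atTop :=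
          (tendsto_pow_atTop two_ne_zero).atTop_div_const (by norm_num)
        have h3 := (g1.comp g2).const_mul (4:ℝ)
        simp only [Function.comp, mul_zero] at h3
        exact h3
      refine tendsto_of_tendsto_of_tendsto_of_le_of_le' tendsto_const_nhds upper ?_ ?_
      · filter_upwards [eventually_ge_atTop (0:ℝ)] with t ht
        positivity
      · filter_upwards [eventually_ge_atTop (4:ℝ)] with t ht
        have hE := Real.exp_pos (-(t^2/16))
        have h4 : t ≤ 4 * (t^2/16) := by nlinarith
        calc t * Real.exp (-t^2/16) = t * Real.exp (-(t^2/16)) := by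
              rw [show -t^2/16 = -(t^2/16) by ring]
          _ ≤ 4 * (t^2/16) * Real.exp (-(t^2/16)) := mul_le_mul_of_nonneg_right h4 hE.le
          _ = 4 * (t^2/16 * Real.exp (-(t^2/16))) := by ring
    have keyB : Tendsto (fun s : ℝ => -s * Real.exp (-s^2/16)) atBot (𝓝 0) := by
      have h5 := key.comp tendsto_neg_atBot_atTop
      refine h5.congr fun s => ?_
      simp only [Function.comp]
      rw [show (-s)^2 = s^2 by ring]
    have h6 := keyB.const_mul (((1:ℝ)/2) ^ (a+1) / (a+1) / 2)
    rw [mul_zero] at h6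
    refine h6.congr fun s => ?_
    ring
  refine tendsto_of_tendsto_of_tendsto_of_le_of_le' tendsto_const_nhds hU ?_ ?_
  · filter_upwards [eventually_lt_atBot (0:ℝ)] with s hs
    refine setIntegral_nonneg measurableSet_Ioc fun v hv => ?_
    have hns : (0:ℝ) < -s := by linarith
    have h2v : (0:ℝ) ≤ 2 * v - s := by have := hv.1; linarith
    positivity
  · filter_upwards [eventually_lt_atBot (0:ℝ)] with s hs
    have hbound : ∀ v ∈ Ioc (s/2) (s/4), ((2*v-s)/(-s))^a * Real.exp (-v^2)
        ≤ Real.exp (-s^2/16) * ((2*v-s)/(-s))^a := by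
      intro v hv
      have hvsq : (s/4)^2 ≤ v^2 := by
        nlinarith [mul_nonneg (by linarith [hv.2] : (0:ℝ) ≤ s/4 - v)
          (by linarith [hv.2] : (0:ℝ) ≤ -(v + s/4))]
      have hexp : Real.exp (-v^2) ≤ Real.exp (-s^2/16) :=
        Real.exp_le_exp.mpr (by nlinarith)
      have hr0 : (0:ℝ) ≤ (2*v-s)/(-s) := div_nonneg (by have := hv.1; linarith) (by linarith)
      calc ((2*v-s)/(-s))^a * Real.exp (-v^2) ≤ ((2*v-s)/(-s))^a * Real.exp (-s^2/16) :=
            mul_le_mul_of_nonneg_left hexp (Real.rpow_nonneg hr0 a)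
        _ = Real.exp (-s^2/16) * ((2*v-s)/(-s))^a := mul_comm _ _
    calc (∫ v in Ioc (s/2) (s/4), ((2*v-s)/(-s))^a * Real.exp (-v^2))
        ≤ ∫ v in Ioc (s/2) (s/4), Real.exp (-s^2/16) * ((2*v-s)/(-s))^a :=
          setIntegral_mono_on (intOn_tail ha hs) ((intOn_ratio ha hs).const_mul _)
            measurableSet_Ioc hbound
      _ = Real.exp (-s^2/16) * (-s/2 * (((1:ℝ)/2) ^ (a+1) / (a+1))) := by
          rw [integral_const_mul, Pval ha hs]

lemma intOn_main {a s : ℝ} (hs : s ≤ -1) :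
    IntegrableOn (fun v : ℝ => ((2*v - s)/(-s)) ^ a * Real.exp (-v ^ 2)) (Ioi (s/4)) := by
  refine Integrable.mono' (((int_gbound (abs_nonneg a)).const_mul ((2:ℝ) ^ |a|)).integrableOn)
    (Measurable.aestronglyMeasurable
      (((((measurable_const.mul measurable_id').sub measurable_const).div_const (-s)).pow
        measurable_const).mul (Real.measurable_exp.comp ((measurable_id'.pow_const 2).neg)))) ?_
  refine (ae_restrict_iff' measurableSet_Ioi).mpr (ae_of_all _ fun v hv => ?_)
  have hns : (0:ℝ) < -s := by linarith
  have h2v : (0:ℝ) ≤ 2*v - s := by have := Set.mem_Ioi.mp hv; linarith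
  rw [Real.norm_eq_abs, abs_of_nonneg (by positivity)]
  exact ptbound hs (Set.mem_Ioi.mp hv)

set_option maxHeartbeats 1000000 in
lemma main_tendsto {a : ℝ} (ha : -1 < a) :
    Tendsto (fun s : ℝ => ∫ v in Ioi (s/4), ((2*v-s)/(-s)) ^ a * Real.exp (-v ^ 2))
      atBot (𝓝 (Real.sqrt Real.pi)) := by
  have hsqrt : (∫ v : ℝ, Real.exp (-v ^ 2)) = Real.sqrt Real.pi := by
    have := integral_gaussian 1
    simpa using this
  have hmeas : ∀ s : ℝ, Measurable fun v : ℝ => ((2*v-s)/(-s))^a * Real.exp (-v^2) := fun s =>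
    ((((measurable_const.mul measurable_id').sub measurable_const).div_const (-s)).pow
      measurable_const).mul (Real.measurable_exp.comp ((measurable_id'.pow_const 2).neg))
  have hDCT : Tendsto (fun s : ℝ => ∫ v : ℝ,
      (Ioi (s/4)).indicator (fun v => ((2*v-s)/(-s))^a * Real.exp (-v^2)) v) atBot
      (𝓝 (∫ v : ℝ, Real.exp (-v ^ 2))) := by
    refine tendsto_integral_filter_of_dominated_convergence
      (fun v => 2 ^ |a| * ((1+2*|v|) ^ |a| * Real.exp (-v^2))) ?_ ?_
      ((int_gbound (abs_nonneg a)).const_mul _) ?_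
    · filter_upwards with s
      exact ((hmeas s).indicator measurableSet_Ioi).aestronglyMeasurable
    · filter_upwards [eventually_le_atBot (-1:ℝ)] with s hs
      refine ae_of_all _ fun v => ?_
      by_cases h : v ∈ Ioi (s/4)
      · have hns : (0:ℝ) < -s := by linarith
        have h2v : (0:ℝ) ≤ 2*v - s := by have := Set.mem_Ioi.mp h; linarith
        rw [Set.indicator_of_mem h, Real.norm_eq_abs, abs_of_nonneg (by positivity)]
        exact ptbound hs (Set.mem_Ioi.mp h)
      · rw [Set.indicator_of_notMem h, norm_zero]
        positivity
    · refine ae_of_all _ fun v => ?_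
      have hratio : Tendsto (fun s : ℝ => (2*v - s)/(-s)) atBot (𝓝 1) := by
        have base : Tendsto (fun s : ℝ => 2*v/(-s) + 1) atBot (𝓝 (0 + 1)) :=
          (Tendsto.div_atTop tendsto_const_nhds tendsto_neg_atBot_atTop).add tendsto_const_nhds
        rw [zero_add] at base
        refine base.congr' ?_
        filter_upwards [eventually_lt_atBot (0:ℝ)] with s hs
        have hs0 : s ≠ 0 := hs.ne
        rw [eq_div_iff (neg_ne_zero.mpr hs0), add_mul,
          div_mul_cancel₀ _ (neg_ne_zero.mpr hs0), one_mul]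
        ring
      have hrpow : Tendsto (fun s : ℝ => ((2*v-s)/(-s))^a) atBot (𝓝 1) := by
        have hc := (Real.continuousAt_rpow_const 1 a (Or.inl one_ne_zero)).tendsto
        have h2 := hc.comp hratio
        rw [Real.one_rpow] at h2
        exact h2
      have hmul : Tendsto (fun s : ℝ => ((2*v-s)/(-s))^a * Real.exp (-v^2)) atBot
          (𝓝 (Real.exp (-v^2))) := by
        have h3 := hrpow.mul_const (Real.exp (-v^2))
        rwa [one_mul] at h3
      refine Tendsto.congr' ?_ hmul
      filter_upwards [eventually_lt_atBot (4*v)] with s hs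
      rw [Set.indicator_of_mem (Set.mem_Ioi.mpr (by linarith : s/4 < v))]
  rw [hsqrt] at hDCT
  exact hDCT.congr fun s => integral_indicator measurableSet_Ioi

lemma part2 (k : ℝ) (hk : -1 < k) :
    Tendsto (fun s : ℝ => |s| ^ (-((k - 1) / 2)) * Real.exp (-s ^ 2 / 4) * I k s)
      atBot (𝓝 (Real.sqrt Real.pi)) := by
  have ha : -1 < (k-1)/2 := by linarith
  have hsum := (tail_tendsto ha).add (main_tendsto ha)
  rw [zero_add] at hsum
  refine Tendsto.congr' ?_ hsum
  filter_upwards [eventually_le_atBot (-1:ℝ)] with s hs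
  have hs0 : s < 0 := lt_of_le_of_lt hs (by norm_num)
  rw [Irep k s hs0, ← Set.Ioc_union_Ioi_eq_Ioi (by linarith : s/2 ≤ s/4),
    setIntegral_union (Set.Ioc_disjoint_Ioi le_rfl) measurableSet_Ioi
      (intOn_tail ha hs0) (intOn_main hs)]

/-- Asymptotics of `I_k`: as `s → +∞`, `s^{(k+1)/2} I_k(s) → 2^{(k-1)/2} Γ((k+1)/2)`;
as `s → -∞`, `|s|^{-(k-1)/2} e^{-s²/4} I_k(s) → √π`. -/
theorem I_asymptotics (k : ℝ) (hk : -1 < k) :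
    Filter.Tendsto (fun s : ℝ => s ^ ((k + 1) / 2) * I k s) Filter.atTop
      (nhds ((2 : ℝ) ^ ((k - 1) / 2) * Real.Gamma ((k + 1) / 2))) ∧
    Filter.Tendsto (fun s : ℝ => |s| ^ (-((k - 1) / 2)) * Real.exp (-s ^ 2 / 4) * I k s)
      Filter.atBot (nhds (Real.sqrt Real.pi)) :=
  ⟨part1 k hk, part2 k hk⟩
end

section
/- For every real n > 0 and every integer p ≥ 1, the universal ratio at the centre of the window satisfies Σ_{n,2p}(0) / (Σ_{n,2}(0))^p = Γ((n+2p)/4) · (Γ(n/4))^{p−1} / (Γ((n+2)/4))^p, where Γ is the Gamma function. -/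
open MeasureTheory

/-- The moment `Σ_{n,k}(s) = I_{k+n-1}(s) / I_{n-1}(s)`. -/
noncomputable def Sig (n k s : ℝ) : ℝ := I (k + n - 1) s / I (n - 1) s

lemma I_zero (k : ℝ) (hk : -1 < k) :
    I k 0 = (4 : ℝ) ^ ((k + 1) / 4) / 4 * Real.Gamma ((k + 1) / 4) := by
  have h : I k 0 = ∫ x in Set.Ioi (0 : ℝ),
      x ^ k * Real.exp (-(1/4 : ℝ) * x ^ (4 : ℝ)) := by
    unfold I
    refine setIntegral_congr_fun measurableSet_Ioi (fun x hx => ?_)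
    rw [show (4:ℝ) = ((4:ℕ):ℝ) by norm_num, Real.rpow_natCast]
    norm_num
    ring_nf
    left; trivial
  rw [h, integral_rpow_mul_exp_neg_mul_rpow (by norm_num) hk (by norm_num)]
  rw [show ((1:ℝ)/4) = ((4:ℝ))⁻¹ by norm_num,
    Real.inv_rpow (by norm_num), ← Real.rpow_neg (by norm_num),
    show -(-(k + 1) / 4) = (k + 1) / 4 by ring]
  ring

lemma Sig_zero (n k : ℝ) (hn : 0 < n) (hk : 0 ≤ k) :
    Sig n k 0 = (4 : ℝ) ^ (k / 4) * (Real.Gamma ((k + n) / 4) / Real.Gamma (n / 4)) := by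
  have h1 : I (k + n - 1) 0 = (4 : ℝ) ^ ((k + n) / 4) / 4 * Real.Gamma ((k + n) / 4) := by
    rw [I_zero _ (by linarith)]; ring_nf
  have h2 : I (n - 1) 0 = (4 : ℝ) ^ (n / 4) / 4 * Real.Gamma (n / 4) := by
    rw [I_zero _ (by linarith)]; ring_nf
  have hG : 0 < Real.Gamma (n / 4) := Real.Gamma_pos_of_pos (by linarith)
  have hr : (0:ℝ) < (4 : ℝ) ^ (n / 4) := Real.rpow_pos_of_pos (by norm_num) _
  have hr2 : (0:ℝ) < (4 : ℝ) ^ ((k + n) / 4) := Real.rpow_pos_of_pos (by norm_num) _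
  have h3 : (4:ℝ) ^ ((k + n) / 4) = (4:ℝ) ^ (k / 4) * (4:ℝ) ^ (n / 4) := by
    rw [← Real.rpow_add (by norm_num)]; ring_nf
  rw [Sig, h1, h2, h3]
  field_simp

/-- The universal ratio at the centre of the window:
`Σ_{n,2p}(0) / Σ_{n,2}(0)^p = Γ((n+2p)/4) Γ(n/4)^{p-1} / Γ((n+2)/4)^p`. -/
theorem universal_ratio_at_zero (n : ℝ) (hn : 0 < n) (p : ℕ) (hp : 1 ≤ p) :
    Sig n (2 * p) 0 / (Sig n 2 0) ^ p
      = Real.Gamma ((n + 2 * p) / 4) * (Real.Gamma (n / 4)) ^ (p - 1)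
          / (Real.Gamma ((n + 2) / 4)) ^ p := by
  have hG : 0 < Real.Gamma (n / 4) := Real.Gamma_pos_of_pos (by linarith)
  have hG2 : 0 < Real.Gamma ((n + 2) / 4) := Real.Gamma_pos_of_pos (by linarith)
  have hG3 : 0 < Real.Gamma ((n + 2 * p) / 4) := by
    refine Real.Gamma_pos_of_pos ?_
    have : (0:ℝ) ≤ (p:ℝ) := Nat.cast_nonneg p
    positivity
  rw [Sig_zero n (2 * p) hn (by positivity), Sig_zero n 2 hn (by norm_num)]
  rw [mul_pow, div_pow, ← Real.rpow_natCast ((4:ℝ) ^ ((2:ℝ)/4)) p, ← Real.rpow_mul (by norm_num)]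
  have he : (2 * (p:ℝ)) / 4 = 2 / 4 * (p:ℝ) := by ring
  have hadd : 2 * (p:ℝ) + n = n + 2 * (p:ℝ) := by ring
  rw [he, hadd, add_comm 2 n]
  have hr : (0:ℝ) < (4:ℝ) ^ ((2:ℝ)/4 * (p:ℝ)) := Real.rpow_pos_of_pos (by norm_num) _
  have hpow : Real.Gamma (n / 4) ^ (p - 1) * Real.Gamma (n / 4) = Real.Gamma (n / 4) ^ p := by
    rw [← pow_succ, Nat.sub_add_cancel hp]
  field_simp
  rw [← hpow]; ring
end

section
/- For all reals −1 < k < k′, every real q > 0, and every s ∈ ℝ, the moment ratio I_{q+k}(s)/I_k(s) is strictly increasing in the order k: I_{q+k′}(s) · I_k(s) > I_{q+k}(s) · I_{k′}(s). -/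
open MeasureTheory

lemma exponent_bound (s x : ℝ) (hx : 0 ≤ x) :
    -x ^ 4 / 4 - s * x ^ 2 / 2 ≤ (2 + s ^ 2 / 2) + -x := by
  nlinarith [sq_nonneg (s + x ^ 2 / 2), sq_nonneg (x ^ 2 - 2), sq_nonneg (x - 1)]

lemma integrable_aux (a s : ℝ) (ha : -1 < a) :
    IntegrableOn (fun x : ℝ => x ^ a * Real.exp (-x ^ 4 / 4 - s * x ^ 2 / 2))
      (Set.Ioi (0 : ℝ)) := by
  have hg0 : IntegrableOn (fun x : ℝ => Real.exp (-x) * x ^ a) (Set.Ioi (0 : ℝ)) := by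
    have := Real.GammaIntegral_convergent (s := a + 1) (by linarith)
    simpa using this
  have hg : IntegrableOn
      (fun x : ℝ => Real.exp (2 + s ^ 2 / 2) * (Real.exp (-x) * x ^ a))
      (Set.Ioi (0 : ℝ)) := hg0.const_mul _
  refine hg.mono' ?_ ?_
  · apply ContinuousOn.aestronglyMeasurable ?_ measurableSet_Ioi
    apply ContinuousOn.mul
    · intro x hx
      exact (Real.continuousAt_rpow_const x a (Or.inl (ne_of_gt hx))).continuousWithinAt
    · exact (Real.continuous_exp.comp (by continuity)).continuousOn
  · filter_upwards [ae_restrict_mem measurableSet_Ioi] with x hx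
    have hx0 : (0 : ℝ) < x := hx
    have hxa : 0 < x ^ a := Real.rpow_pos_of_pos hx0 a
    rw [Real.norm_eq_abs, abs_of_nonneg (by positivity)]
    have hE : Real.exp (-x ^ 4 / 4 - s * x ^ 2 / 2) ≤
        Real.exp (2 + s ^ 2 / 2) * Real.exp (-x) := by
      rw [← Real.exp_add]
      exact Real.exp_le_exp.mpr (exponent_bound s x hx0.le)
    calc x ^ a * Real.exp (-x ^ 4 / 4 - s * x ^ 2 / 2)
        ≤ x ^ a * (Real.exp (2 + s ^ 2 / 2) * Real.exp (-x)) :=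
          mul_le_mul_of_nonneg_left hE hxa.le
      _ = Real.exp (2 + s ^ 2 / 2) * (Real.exp (-x) * x ^ a) := by ring

/-- The moment ratio `I_{q+k}(s)/I_k(s)` is strictly increasing in the order `k`, in the
cross-multiplied form `I_{q+k'}(s) I_k(s) > I_{q+k}(s) I_{k'}(s)` for `-1 < k < k'`, `q > 0`. -/
theorem moment_ratio_strict_mono (k k' q s : ℝ) (hk : -1 < k) (hkk' : k < k') (hq : 0 < q) :
    I (q + k) s * I k' s < I (q + k') s * I k s := by
  set r : ℝ := k' - k with hr_def
  have hr : 0 < r := by simp [hr_def]; linarith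
  have hk' : -1 < k' := by linarith
  have hqk : -1 < q + k := by linarith
  have hqk' : -1 < q + k' := by linarith
  set f : ℝ → ℝ → ℝ := fun a x => x ^ a * Real.exp (-x ^ 4 / 4 - s * x ^ 2 / 2) with hf_def
  set μp : Measure (ℝ × ℝ) :=
    ((volume : Measure ℝ).restrict (Set.Ioi 0)).prod
      ((volume : Measure ℝ).restrict (Set.Ioi 0)) with hμp_def
  have hint : ∀ a b : ℝ, -1 < a → -1 < b →
      Integrable (fun p : ℝ × ℝ => f a p.1 * f b p.2) μp := fun a b ha hb =>
    (integrable_aux a s ha).mul_prod (integrable_aux b s hb)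
  have hval : ∀ a b : ℝ, (∫ p : ℝ × ℝ, f a p.1 * f b p.2 ∂μp) = I a s * I b s := fun a b =>
    integral_prod_mul (f a) (f b)
  set G : ℝ × ℝ → ℝ := fun p =>
    f (q + k') p.1 * f k p.2 - f (q + k) p.1 * f k' p.2
      - f k' p.1 * f (q + k) p.2 + f k p.1 * f (q + k') p.2 with hG_def
  have h1 := hint (q + k') k hqk' hk
  have h2 := hint (q + k) k' hqk hk'
  have h3 := hint k' (q + k) hk' hqk
  have h4 := hint k (q + k') hk hqk'
  have hGint : Integrable G μp := ((h1.sub h2).sub h3).add h4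
  have hGval : ∫ p, G p ∂μp =
      2 * (I (q + k') s * I k s - I (q + k) s * I k' s) := by
    rw [hG_def]
    simp only
    have e1 := integral_add ((h1.sub h2).sub h3) h4
    have e2 := integral_sub (h1.sub h2) h3
    have e3 := integral_sub h1 h2
    simp only [Pi.add_apply, Pi.sub_apply] at e1 e2 e3
    rw [e1, e2, e3, hval, hval, hval, hval]
    ring
  -- pointwise factorization for positive coordinates
  have hkey : ∀ x y : ℝ, 0 < x → 0 < y →
      G (x, y) = (x ^ q - y ^ q) * (x ^ r - y ^ r) *
        ((x ^ k * Real.exp (-x ^ 4 / 4 - s * x ^ 2 / 2)) *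
          (y ^ k * Real.exp (-y ^ 4 / 4 - s * y ^ 2 / 2))) := by
    intro x y hx hy
    have e1 : q + k' = q + (r + k) := by rw [hr_def]; ring
    have e2 : k' = r + k := by rw [hr_def]; ring
    simp only [hG_def, hf_def, e1, e2, Real.rpow_add hx, Real.rpow_add hy]
    ring
  have hμp_eq : μp = ((volume : Measure ℝ).prod volume).restrict
      (Set.Ioi 0 ×ˢ Set.Ioi 0) := Measure.prod_restrict _ _
  have hG0 : 0 ≤ᵐ[μp] G := by
    rw [hμp_eq]
    filter_upwards [ae_restrict_mem (measurableSet_Ioi.prod measurableSet_Ioi)] with p hp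
    obtain ⟨hp1, hp2⟩ := hp
    have hx : (0 : ℝ) < p.1 := hp1
    have hy : (0 : ℝ) < p.2 := hp2
    have := hkey p.1 p.2 hx hy
    rw [show (p.1, p.2) = p from rfl] at this
    rw [this]
    have hw : 0 ≤ (p.1 ^ k * Real.exp (-p.1 ^ 4 / 4 - s * p.1 ^ 2 / 2)) *
        (p.2 ^ k * Real.exp (-p.2 ^ 4 / 4 - s * p.2 ^ 2 / 2)) := by positivity
    refine mul_nonneg ?_ hw
    rcases le_total p.1 p.2 with h | h
    · have a1 := sub_nonpos.2 (Real.rpow_le_rpow hx.le h hq.le)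
      have a2 := sub_nonpos.2 (Real.rpow_le_rpow hx.le h hr.le)
      nlinarith
    · exact mul_nonneg
        (sub_nonneg.2 (Real.rpow_le_rpow hy.le h hq.le))
        (sub_nonneg.2 (Real.rpow_le_rpow hy.le h hr.le))
  have hpos : 0 < ∫ p, G p ∂μp := by
    rw [integral_pos_iff_support_of_nonneg_ae hG0 hGint]
    have hsub : Set.Ioo (1 : ℝ) 2 ×ˢ Set.Ioo (3 : ℝ) 4 ⊆ Function.support G := by
      rintro ⟨x, y⟩ ⟨hx, hy⟩
      have hx0 : (0 : ℝ) < x := by linarith [hx.1]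
      have hy0 : (0 : ℝ) < y := by linarith [hy.1]
      have hxy : x < y := by linarith [hx.2, hy.1]
      have hGxy : 0 < G (x, y) := by
        rw [hkey x y hx0 hy0]
        have h1 : x ^ q < y ^ q := Real.rpow_lt_rpow hx0.le hxy hq
        have h2 : x ^ r < y ^ r := Real.rpow_lt_rpow hx0.le hxy hr
        have hw : 0 < (x ^ k * Real.exp (-x ^ 4 / 4 - s * x ^ 2 / 2)) *
            (y ^ k * Real.exp (-y ^ 4 / 4 - s * y ^ 2 / 2)) := by positivity
        have : 0 < (x ^ q - y ^ q) * (x ^ r - y ^ r) :=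
          mul_pos_of_neg_of_neg (by linarith) (by linarith)
        exact mul_pos this hw
      exact Function.mem_support.2 (ne_of_gt hGxy)
    calc (0 : ENNReal) < μp (Set.Ioo (1 : ℝ) 2 ×ˢ Set.Ioo (3 : ℝ) 4) := by
          rw [hμp_def, Measure.prod_prod,
            Measure.restrict_apply' measurableSet_Ioi,
            Measure.restrict_apply' measurableSet_Ioi]
          have e1 : Set.Ioo (1 : ℝ) 2 ∩ Set.Ioi 0 = Set.Ioo 1 2 :=
            Set.inter_eq_left.2 fun x hx => lt_trans one_pos hx.1
          have e2 : Set.Ioo (3 : ℝ) 4 ∩ Set.Ioi 0 = Set.Ioo 3 4 :=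
            Set.inter_eq_left.2 fun x hx => lt_trans (by norm_num) hx.1
          rw [e1, e2, Real.volume_Ioo, Real.volume_Ioo]
          norm_num
      _ ≤ μp (Function.support G) := measure_mono hsub
  linarith [hGval ▸ hpos]
end
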